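/- Let d, μ, L ∈ ℝ with d > 0, 0 < 2μ ≤ d, and L > d. In ℝ² let R = (0, 0), C′ = (0, d), N′ = (L, 0), and let v = μ • (−√3/2, −1/2). Set C = C′ + v and, for t ∈ [0, 1], N = N′ + t • v. Then ⟪C − R, N − R⟫ < 0; that is, the angle ∠NRC is strictly greater than 90°. -/

import Mathlib

open scoped RealInnerProductSpace

/-- The point of `ℝ² = EuclideanSpace ℝ (Fin 2)` with coordinates `(x, y)`. -/
def pt (x y : ℝ) : EuclideanSpace ℝ (Fin 2) := WithLp.toLp 2 ![x, y]

/-- Phase-4 claim for destination `D₂`: with `R` at the origin, `C′ = (0, d)`,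
`N′ = (L, 0)` with `L > d` and `2μ ≤ d`, after the Commander moves by
`v = μ • (−√3/2, −1/2)` to `C = C′ + v`, at every intermediate position
`N = N′ + t • v` (`t ∈ [0,1]`) of the Number robot the angle `∠NRC` stays
obtuse, i.e. `⟪C − R, N − R⟫ < 0`. -/
theorem turingmobile_phase4_angle_obtuse
    (d μ L : ℝ) (hd : 0 < d) (hμ : 0 < μ) (hμd : 2 * μ ≤ d) (hL : d < L)
    (R C' N' v C : EuclideanSpace ℝ (Fin 2))
    (hR : R = pt 0 0) (hC' : C' = pt 0 d) (hN' : N' = pt L 0)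
    (hv : v = μ • pt (-(Real.sqrt 3) / 2) (-(1 / 2)))
    (hC : C = C' + v) :
    ∀ t ∈ Set.Icc (0 : ℝ) 1, ∀ N : EuclideanSpace ℝ (Fin 2),
      N = N' + t • v → ⟪C - R, N - R⟫ < 0 := by
  rintro t ⟨ht0, ht1⟩ N hN
  subst hR hC' hN' hv hC hN
  have hs2 : Real.sqrt 3 * Real.sqrt 3 = 3 := Real.mul_self_sqrt (by norm_num)
  have hs0 : (1:ℝ) ≤ Real.sqrt 3 := by nlinarith [Real.sqrt_nonneg 3]
  simp only [PiLp.inner_apply, Fin.sum_univ_two, pt, PiLp.sub_apply, PiLp.add_apply,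
    PiLp.smul_apply, PiLp.toLp_apply, Matrix.cons_val_zero, Matrix.cons_val_one, Matrix.head_cons,
    RCLike.inner_apply, conj_trivial, smul_eq_mul]
  have h1 : 0 ≤ t * μ * (d - 2 * μ) :=
    mul_nonneg (mul_nonneg ht0 hμ.le) (by linarith)
  have h2 : 0 < μ * L := mul_pos hμ (hd.trans hL)
  have h3 : t * (μ * μ) * (Real.sqrt 3 * Real.sqrt 3) = t * (μ * μ) * 3 := by rw [hs2]
  nlinarith [mul_le_mul_of_nonneg_left hs0 h2.le, h3]
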